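/- Let d ≥ 1 be an integer and let 0 < α < 1 and β > 0 be real numbers with α + β ≥ 1. Let τ₁ > d + 2, set ς = (τ₁ + 1)/(1 − α) and τ = 12τ₁ + 16ς. Let λ ∈ ℝ and let ρ, M > 0, 0 < γ ≤ 1, ε ≥ 0 and K ≥ 2 be real numbers with ε ≤ γ/8, ε·M ≤ 1/4 and γ·K^{τ₁} ≥ 8. Let O ⊆ ℝ^d be Lebesgue measurable and let ω : O → ℝ^d satisfy ‖ω(ξ)‖ ≤ ρ for all ξ ∈ O and ‖ξ − η‖ ≤ M·‖ω(ξ) − ω(η)‖ for all ξ, η ∈ O. For each nonzero n ∈ ℤ let Ω_n : O → ℝ satisfy |Ω_n(ξ) − |n|^α − λ| ≤ ε·|n|^{−2β} for all ξ ∈ O and |Ω_n(ξ) − Ω_n(η)| ≤ ε·|n|^{−2β}·‖ξ − η‖ for all ξ, η ∈ O. Then there is a constant C depending only on d, α, τ₁, ρ and M such that meas(⋃_{k ∈ ℤ^d, 0 < ‖k‖_∞ ≤ K} ⋃_{n, m nonzero integers, |n| ≠ |m|, |n − m| ≤ K} {ξ ∈ O : |⟨k, ω(ξ)⟩| ≥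 γ·K^{−τ₁} and |⟨k, ω(ξ)⟩ + Ω_n(ξ) − Ω_m(ξ)| ≤ γ·K^{−τ}}) ≤ C·γ^{1/4}·K^{−τ₁}. -/

import Mathlib

open MeasureTheory Metric RealInnerProductSpace




lemma cnt_sep (n : ℕ) (s : Finset (EuclideanSpace ℝ (Fin n))) (r ρ' : ℝ) (hr : 0 < r)
    (hρ' : 0 ≤ ρ')
    (hsep : ∀ a ∈ s, ∀ b ∈ s, a ≠ b → r ≤ dist a b)
    (hb : ∀ a ∈ s, ‖a‖ ≤ ρ') :
    (s.card : ℝ) ≤ ((ρ' + r/2)/(r/2))^n := by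
  set V := volume (ball (0 : EuclideanSpace ℝ (Fin n)) 1) with hV
  have hVpos : 0 < V := measure_ball_pos _ _ one_pos
  have hVlt : V < ⊤ := measure_ball_lt_top
  have hdisj : (↑s : Set (EuclideanSpace ℝ (Fin n))).PairwiseDisjoint
      (fun a => ball a (r/2)) := by
    intro a ha b hb hab
    apply Set.disjoint_left.2
    intro x hxa hxb
    have := hsep a ha b hb hab
    have : dist a b < r := by
      calc dist a b ≤ dist a x + dist x b := dist_triangle _ _ _
      _ < r/2 + r/2 := by
          rw [dist_comm a x]
          exact add_lt_add hxa hxb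
      _ = r := by ring
    linarith [hsep a ha b hb hab]
  have hmeas : ∀ a ∈ s, MeasurableSet (ball a (r/2)) := fun a _ => measurableSet_ball
  have hunion : volume (⋃ a ∈ s, ball a (r/2)) = ∑ a ∈ s, volume (ball a (r/2)) :=
    measure_biUnion_finset hdisj hmeas
  have hsub : (⋃ a ∈ s, ball a (r/2)) ⊆ ball (0 : EuclideanSpace ℝ (Fin n)) (ρ' + r/2) := by
    intro x hx
    simp only [Set.mem_iUnion] at hx
    obtain ⟨a, ha, hxa⟩ := hx
    have : dist x (0 : EuclideanSpace ℝ (Fin n)) ≤ dist x a + dist a 0 := dist_triangle _ _ _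
    rw [mem_ball]
    have h2 : dist a (0 : EuclideanSpace ℝ (Fin n)) ≤ ρ' := by
      rw [dist_zero_right]; exact hb a ha
    calc dist x 0 ≤ dist x a + dist a 0 := dist_triangle _ _ _
      _ < r/2 + ρ' := add_lt_add_of_lt_of_le hxa h2
      _ = ρ' + r/2 := by ring
  have hballr : ∀ a : EuclideanSpace ℝ (Fin n),
      volume (ball a (r/2)) = ENNReal.ofReal ((r/2) ^ n) * V := by
    intro a
    rw [Measure.addHaar_ball_of_pos _ _ (by linarith : (0:ℝ) < r/2)]
    simp [finrank_euclideanSpace_fin, hV]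
  have hbig : volume (ball (0 : EuclideanSpace ℝ (Fin n)) (ρ' + r/2))
      = ENNReal.ofReal ((ρ' + r/2) ^ n) * V := by
    rw [Measure.addHaar_ball_of_pos _ _ (by linarith : (0:ℝ) < ρ' + r/2)]
    simp [finrank_euclideanSpace_fin, hV]
  have key : (s.card : ENNReal) * (ENNReal.ofReal ((r/2) ^ n) * V)
      ≤ ENNReal.ofReal ((ρ' + r/2) ^ n) * V := by
    rw [← hbig]
    calc (s.card : ENNReal) * (ENNReal.ofReal ((r/2) ^ n) * V)
        = ∑ a ∈ s, volume (ball a (r/2)) := by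
          rw [Finset.sum_congr rfl (fun a _ => hballr a), Finset.sum_const, nsmul_eq_mul]
      _ = volume (⋃ a ∈ s, ball a (r/2)) := hunion.symm
      _ ≤ _ := measure_mono hsub
  -- pass to reals
  have hfin : ENNReal.ofReal ((ρ' + r/2) ^ n) * V ≠ ⊤ :=
    ENNReal.mul_ne_top ENNReal.ofReal_ne_top hVlt.ne
  have := ENNReal.toReal_mono hfin key
  rw [ENNReal.toReal_mul, ENNReal.toReal_mul, ENNReal.toReal_mul] at this
  simp only [ENNReal.toReal_natCast, ENNReal.toReal_ofReal (by positivity : (0:ℝ) ≤ (r/2)^n),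
    ENNReal.toReal_ofReal (by positivity : (0:ℝ) ≤ (ρ' + r/2)^n)] at this
  have hVr : 0 < V.toReal := ENNReal.toReal_pos hVpos.ne' hVlt.ne
  have h1 : (s.card : ℝ) * (r/2)^n ≤ (ρ' + r/2)^n := by
    have h2 : ((s.card : ℝ) * (r/2)^n) * V.toReal ≤ (ρ' + r/2)^n * V.toReal := by
      calc ((s.card : ℝ) * (r/2)^n) * V.toReal = (s.card : ℝ) * ((r/2)^n * V.toReal) := by ring
        _ ≤ _ := this
    exact le_of_mul_le_mul_right h2 hVr
  rw [div_pow, le_div_iff₀ (by positivity : (0:ℝ) < (r/2)^n)]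
  exact h1




lemma greedy {X : Type*} [PseudoMetricSpace X] (r : ℝ) (hr : 0 < r) :
    ∀ l : List X, ∃ l' : List X, (∀ y ∈ l', y ∈ l) ∧
      l'.Pairwise (fun a b => r ≤ dist a b) ∧ ∀ x ∈ l, ∃ y ∈ l', dist x y < r := by
  intro l
  induction l with
  | nil => exact ⟨[], by simp, by simp, by simp⟩
  | cons x l ih =>
    obtain ⟨l', hsub, hpw, hcov⟩ := ih
    by_cases h : ∀ y ∈ l', r ≤ dist x y
    · refine ⟨x :: l', ?_, ?_, ?_⟩
      · intro y hy
        rcases List.mem_cons.1 hy with rfl | hy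
        · exact List.mem_cons_self
        · exact List.mem_cons_of_mem _ (hsub _ hy)
      · exact List.Pairwise.cons h hpw
      · intro z hz
        rcases List.mem_cons.1 hz with rfl | hz
        · exact ⟨z, List.mem_cons_self, by simpa using hr⟩
        · obtain ⟨y, hy, hxy⟩ := hcov z hz
          exact ⟨y, List.mem_cons_of_mem _ hy, hxy⟩
    · push_neg at h
      obtain ⟨y, hy, hxy⟩ := h
      refine ⟨l', fun z hz => List.mem_cons_of_mem _ (hsub z hz), hpw, ?_⟩
      intro z hz
      rcases List.mem_cons.1 hz with rfl | hz
      · exact ⟨y, hy, hxy⟩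
      · exact hcov z hz



lemma rpow_anti_base {a N c : ℝ} (hN : 0 < N) (ha : N ≤ a) (hc : c ≤ 0) : a ^ c ≤ N ^ c := by
  have ha0 : (0:ℝ) < a := by linarith
  rw [← neg_neg c, Real.rpow_neg ha0.le, Real.rpow_neg hN.le]
  exact inv_anti₀ (Real.rpow_pos_of_pos hN _) (Real.rpow_le_rpow hN.le ha (by linarith))

lemma rpow_diff_one_side {α N K a b : ℝ} (hα0 : 0 < α) (hα1 : α ≤ 1) (hN : 1 ≤ N)
    (hb : N ≤ b) (hab : b ≤ a) (hK : a - b ≤ K) :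
    a ^ α - b ^ α ≤ K * N ^ (α - 1) := by
  have hb0 : (0:ℝ) < b := by linarith
  have ha0 : (0:ℝ) < a := by linarith
  have hdiv : (1:ℝ) ≤ a / b := (one_le_div hb0).2 hab
  have h1 : a ^ α ≤ b ^ α * (a / b) := by
    have : a ^ α = b ^ α * (a / b) ^ α := by
      rw [← Real.mul_rpow hb0.le (by positivity)]
      rw [mul_div_cancel₀ _ hb0.ne']
    rw [this]
    apply mul_le_mul_of_nonneg_left _ (Real.rpow_nonneg hb0.le _)
    calc (a / b) ^ α ≤ (a / b) ^ (1:ℝ) :=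
          Real.rpow_le_rpow_of_exponent_le hdiv hα1
      _ = a / b := Real.rpow_one _
  have h2 : b ^ α * (a / b) - b ^ α = (a - b) * b ^ (α - 1) := by
    rw [Real.rpow_sub hb0, Real.rpow_one]
    field_simp
  have h3 : b ^ (α - 1) ≤ N ^ (α - 1) := rpow_anti_base (by linarith) hb (by linarith)
  have h4 : (0:ℝ) ≤ a - b := by linarith
  calc a ^ α - b ^ α ≤ b ^ α * (a / b) - b ^ α := by linarith
    _ = (a - b) * b ^ (α - 1) := h2
    _ ≤ K * N ^ (α - 1) := by
        apply mul_le_mul hK h3 (Real.rpow_nonneg hb0.le _) (by linarith)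

lemma rpow_diff_abs {α N K a b : ℝ} (hα0 : 0 < α) (hα1 : α ≤ 1) (hN : 1 ≤ N)
    (ha : N ≤ a) (hb : N ≤ b) (hK : |a - b| ≤ K) :
    |a ^ α - b ^ α| ≤ K * N ^ (α - 1) := by
  rcases le_total b a with h | h
  · rw [abs_of_nonneg (by
      have := Real.rpow_le_rpow (by linarith : (0:ℝ) ≤ b) h hα0.le
      linarith)]
    exact rpow_diff_one_side hα0 hα1 hN hb h (by rw [abs_of_nonneg (by linarith)] at hK; linarith)
  · rw [abs_sub_comm, abs_of_nonneg (by
      have := Real.rpow_le_rpow (by linarith : (0:ℝ) ≤ a) h hα0.le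
      linarith)]
    exact rpow_diff_one_side hα0 hα1 hN ha h (by rw [abs_sub_comm, abs_of_nonneg (by linarith)] at hK; linarith)

lemma coord_le_norm (d : ℕ) (x : EuclideanSpace ℝ (Fin d)) (i : Fin d) : |x i| ≤ ‖x‖ := by
  rw [EuclideanSpace.norm_eq, ← Real.sqrt_sq_eq_abs]
  apply Real.sqrt_le_sqrt
  calc x i ^ 2 ≤ ∑ j, x j ^ 2 :=
        Finset.single_le_sum (fun j _ => sq_nonneg (x j)) (Finset.mem_univ i)
    _ = ∑ j, ‖x j‖ ^ 2 := by simp [Real.norm_eq_abs, sq_abs]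

lemma thinA (d : ℕ) (hd : 1 ≤ d) (e : EuclideanSpace ℝ (Fin d)) (he : ‖e‖ = 1)
    (A : Set (EuclideanSpace ℝ (Fin d)))
    (φ : EuclideanSpace ℝ (Fin d) → EuclideanSpace ℝ (Fin d))
    (M ρ δ : ℝ) (hM : 0 < M) (hρ : 0 < ρ) (hδ : 0 < δ)
    (h1 : ∀ ξ ∈ A, ∀ η ∈ A, ‖ξ - η‖ ≤ M * ‖φ ξ - φ η‖)
    (h2 : ∀ ξ ∈ A, ‖φ ξ‖ ≤ ρ)
    (h3 : ∀ ξ ∈ A, ∀ η ∈ A, |⟪e, φ ξ - φ η⟫| ≤ 2*δ + ‖φ ξ - φ η‖/2) :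
    volume A ≤ ENNReal.ofReal (((ρ + 4*δ)/(4*δ))^(d-1) * (32*M*δ)^d) *
      volume (ball (0 : EuclideanSpace ℝ (Fin d)) 1) := by
  classical
  rcases Set.eq_empty_or_nonempty A with rfl | ⟨ξ₀, hξ₀⟩
  · simp
  -- A is bounded, hence totally bounded
  have hbdd : A ⊆ closedBall ξ₀ (2*M*ρ) := by
    intro ξ hξ
    rw [mem_closedBall, dist_eq_norm]
    calc ‖ξ - ξ₀‖ ≤ M * ‖φ ξ - φ ξ₀‖ := h1 ξ hξ ξ₀ hξ₀
      _ ≤ M * (‖φ ξ‖ + ‖φ ξ₀‖) := by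
          have := norm_sub_le (φ ξ) (φ ξ₀)
          nlinarith
      _ ≤ M * (ρ + ρ) := by
          have := h2 ξ hξ; have := h2 ξ₀ hξ₀; nlinarith
      _ = 2*M*ρ := by ring
  have htb : TotallyBounded A :=
    TotallyBounded.subset hbdd (isCompact_closedBall _ _).totallyBounded
  set r : ℝ := 16*M*δ with hr_def
  have hr : 0 < r := by positivity
  obtain ⟨t, htA, htfin, htcov⟩ := finite_approx_of_totallyBounded htb r hr
  obtain ⟨l', hl'sub, hl'pw, hl'cov⟩ := greedy r hr htfin.toFinset.toList
  -- the separated finset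
  set t' : Finset (EuclideanSpace ℝ (Fin d)) := l'.toFinset with ht'_def
  have ht'A : ∀ ξ ∈ t', ξ ∈ A := by
    intro ξ hξ
    rw [ht'_def, List.mem_toFinset] at hξ
    exact htA (by simpa using (htfin.mem_toFinset).1 (Finset.mem_toList.1 (hl'sub ξ hξ)))
  have ht'sep : ∀ a ∈ t', ∀ b ∈ t', a ≠ b → r ≤ dist a b := by
    intro a ha b hb hab
    rw [ht'_def, List.mem_toFinset] at ha hb
    haveI : Std.Symm (fun a b : EuclideanSpace ℝ (Fin d) => r ≤ dist a b) :=
      ⟨fun x y h => by rwa [dist_comm]⟩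
    exact hl'pw.forall ha hb hab
  have hcov : A ⊆ ⋃ z ∈ t', ball z (2*r) := by
    intro ξ hξ
    obtain ⟨y, hy, hξy⟩ := Set.mem_iUnion₂.1 (htcov hξ)
    obtain ⟨z, hz, hyz⟩ := hl'cov y ((Finset.mem_toList).2 (htfin.mem_toFinset.2 hy))
    refine Set.mem_iUnion₂.2 ⟨z, by rw [ht'_def, List.mem_toFinset]; exact hz, ?_⟩
    rw [mem_ball] at hξy ⊢
    calc dist ξ z ≤ dist ξ y + dist y z := dist_triangle _ _ _
      _ < r + r := add_lt_add hξy hyz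
      _ = 2*r := by ring
  -- projection machinery
  have he0 : e ≠ 0 := by intro h; rw [h, norm_zero] at he; norm_num at he
  set E := (ℝ ∙ e)ᗮ with hE_def
  set n := Module.finrank ℝ E with hn_def
  have hnd : n = d - 1 := by
    have h1 : Module.finrank ℝ (ℝ ∙ e) + n = d := by
      rw [hn_def, hE_def, Submodule.finrank_add_finrank_orthogonal,
        finrank_euclideanSpace_fin]
    rw [finrank_span_singleton he0] at h1
    omega
  set q : EuclideanSpace ℝ (Fin d) → EuclideanSpace ℝ (Fin d) :=
    fun x => x - ⟪e, x⟫ • e with hq_def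
  have hqE : ∀ x, q x ∈ E := by
    intro x
    rw [hE_def, Submodule.mem_orthogonal_singleton_iff_inner_right]
    rw [hq_def]
    simp only [inner_sub_right, real_inner_smul_right]
    rw [real_inner_self_eq_norm_sq, he]
    ring
  have hqsq : ∀ x, ‖q x‖^2 = ‖x‖^2 - ⟪e, x⟫^2 := by
    intro x
    rw [hq_def]
    simp only
    rw [norm_sub_sq_real, real_inner_smul_right, norm_smul, real_inner_comm x e, he]
    rw [Real.norm_eq_abs, mul_pow, sq_abs]
    ring
  have hqlin : ∀ x y, q x - q y = q (x - y) := by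
    intro x y
    rw [hq_def]
    simp only [inner_sub_right, sub_smul]
    abel
  set b := stdOrthonormalBasis ℝ E with hb_def
  set ψ : EuclideanSpace ℝ (Fin d) → EuclideanSpace ℝ (Fin n) :=
    fun x => WithLp.toLp 2 (fun j => ⟪((b j : E) : EuclideanSpace ℝ (Fin d)), x⟫) with hψ_def
  have hψnorm : ∀ z, z ∈ E → ‖ψ z‖ = ‖z‖ := by
    intro z hz
    have : ψ z = b.repr ⟨z, hz⟩ := by
      ext j
      rw [hψ_def]
      simp only [PiLp.toLp_apply]
      rw [b.repr_apply_apply ⟨z, hz⟩ j, Submodule.coe_inner]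
    rw [this, b.repr.norm_map]
    rfl
  have hψlin : ∀ x y, ψ x - ψ y = ψ (x - y) := by
    intro x y
    ext j
    rw [hψ_def]
    simp only [PiLp.toLp_apply, PiLp.sub_apply, inner_sub_right]
  set F : EuclideanSpace ℝ (Fin d) → EuclideanSpace ℝ (Fin n) :=
    fun ξ => ψ (q (φ ξ)) with hF_def
  have hFdist : ∀ ξ η, dist (F ξ) (F η) = ‖q (φ ξ - φ η)‖ := by
    intro ξ η
    rw [dist_eq_norm, hF_def]
    simp only
    rw [hψlin, hqlin, hψnorm _ (hqE _)]
  have hFsep : ∀ ξ ∈ t', ∀ η ∈ t', ξ ≠ η → 8*δ ≤ dist (F ξ) (F η) := by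
    intro ξ hξ η hη hne
    have hu : 16*δ ≤ ‖φ ξ - φ η‖ := by
      have h₁ := ht'sep ξ hξ η hη hne
      have h₂ := h1 ξ (ht'A ξ hξ) η (ht'A η hη)
      rw [dist_eq_norm] at h₁
      rw [hr_def] at h₁
      nlinarith
    have h3' := h3 ξ (ht'A ξ hξ) η (ht'A η hη)
    have hsq := hqsq (φ ξ - φ η)
    rw [hFdist]
    nlinarith [norm_nonneg (q (φ ξ - φ η)), norm_nonneg (φ ξ - φ η),
      abs_nonneg (⟪e, φ ξ - φ η⟫), sq_abs (⟪e, φ ξ - φ η⟫)]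
  have hFnorm : ∀ ξ ∈ t', ‖F ξ‖ ≤ ρ := by
    intro ξ hξ
    have hsq := hqsq (φ ξ)
    have h₂ := h2 ξ (ht'A ξ hξ)
    have : ‖F ξ‖ = ‖q (φ ξ)‖ := by
      rw [hF_def]; exact hψnorm _ (hqE _)
    rw [this]
    nlinarith [norm_nonneg (q (φ ξ)), norm_nonneg (φ ξ), sq_nonneg (⟪e, φ ξ⟫)]
  -- count
  have hinj : Set.InjOn F ↑t' := by
    intro a ha b hb hab
    by_contra hne
    have := hFsep a ha b hb hne
    rw [hab, dist_self] at this
    linarith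
  have hcard : ((t'.image F).card : ℝ) = (t'.card : ℝ) := by
    rw [Finset.card_image_of_injOn hinj]
  have hcnt : (t'.card : ℝ) ≤ ((ρ + 4*δ)/(4*δ))^(d-1) := by
    rw [← hcard, ← hnd]
    have := cnt_sep n (t'.image F) (8*δ) ρ (by positivity) hρ.le ?_ ?_
    · convert this using 3 <;> ring
    · intro a ha b hb hab
      obtain ⟨ξ, hξ, rfl⟩ := Finset.mem_image.1 ha
      obtain ⟨η, hη, rfl⟩ := Finset.mem_image.1 hb
      exact hFsep ξ hξ η hη (fun h => hab (by rw [h]))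
    · intro a ha
      obtain ⟨ξ, hξ, rfl⟩ := Finset.mem_image.1 ha
      exact hFnorm ξ hξ
  -- measure estimate
  have hball : ∀ z : EuclideanSpace ℝ (Fin d), volume (ball z (2*r))
      = ENNReal.ofReal ((32*M*δ)^d) * volume (ball (0 : EuclideanSpace ℝ (Fin d)) 1) := by
    intro z
    rw [Measure.addHaar_ball_of_pos _ _ (by positivity : (0:ℝ) < 2*r)]
    rw [finrank_euclideanSpace_fin, hr_def]
    norm_num
    ring_nf
  calc volume A ≤ volume (⋃ z ∈ t', ball z (2*r)) := measure_mono hcov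
    _ ≤ ∑ z ∈ t', volume (ball z (2*r)) := measure_biUnion_finset_le _ _
    _ = (t'.card : ENNReal) * (ENNReal.ofReal ((32*M*δ)^d) *
        volume (ball (0 : EuclideanSpace ℝ (Fin d)) 1)) := by
        rw [Finset.sum_congr rfl (fun z _ => hball z), Finset.sum_const, nsmul_eq_mul]
    _ ≤ ENNReal.ofReal (((ρ + 4*δ)/(4*δ))^(d-1)) * (ENNReal.ofReal ((32*M*δ)^d) *
        volume (ball (0 : EuclideanSpace ℝ (Fin d)) 1)) := by
        apply mul_le_mul_left
        rw [← ENNReal.ofReal_natCast]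
        exact ENNReal.ofReal_le_ofReal hcnt
    _ = ENNReal.ofReal (((ρ + 4*δ)/(4*δ))^(d-1) * (32*M*δ)^d) *
        volume (ball (0 : EuclideanSpace ℝ (Fin d)) 1) := by
        rw [← mul_assoc, ← ENNReal.ofReal_mul (by positivity)]

set_option maxHeartbeats 4000000 in
theorem stmt_12 (d : ℕ) (hd : 1 ≤ d) (α τ₁ ρ M : ℝ)
    (hα0 : 0 < α) (hα1 : α < 1) (hτ₁ : τ₁ > d + 2) (hρ : 0 < ρ) (hM : 0 < M) :
    ∃ C : ℝ, 0 < C ∧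
      ∀ (β ς τ lam γ ε K : ℝ),
        0 < β → 1 ≤ α + β →
        ς = (τ₁ + 1) / (1 - α) → τ = 12 * τ₁ + 16 * ς →
        0 < γ → γ ≤ 1 → 0 ≤ ε → 2 ≤ K →
        ε ≤ γ / 8 → ε * M ≤ 1 / 4 → γ * K ^ τ₁ ≥ 8 →
      ∀ (O : Set (EuclideanSpace ℝ (Fin d))), MeasurableSet O →
      ∀ ω : EuclideanSpace ℝ (Fin d) → EuclideanSpace ℝ (Fin d),
        (∀ ξ ∈ O, ‖ω ξ‖ ≤ ρ) →
        (∀ ξ ∈ O, ∀ η ∈ O, ‖ξ - η‖ ≤ M * ‖ω ξ - ω η‖) →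
      ∀ Ω : ℤ → EuclideanSpace ℝ (Fin d) → ℝ,
        (∀ n : ℤ, n ≠ 0 → ∀ ξ ∈ O, |Ω n ξ - (|n| : ℝ) ^ α - lam| ≤ ε * (|n| : ℝ) ^ (-(2 * β))) →
        (∀ n : ℤ, n ≠ 0 → ∀ ξ ∈ O, ∀ η ∈ O,
          |Ω n ξ - Ω n η| ≤ ε * (|n| : ℝ) ^ (-(2 * β)) * ‖ξ - η‖) →
        volume (⋃ k ∈ {k : Fin d → ℤ | k ≠ 0 ∧ ∀ i, (|k i| : ℝ) ≤ K},
            ⋃ n ∈ {n : ℤ | n ≠ 0}, ⋃ m ∈ {m : ℤ | m ≠ 0 ∧ |n| ≠ |m| ∧ (|n - m| : ℝ) ≤ K},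
            {ξ ∈ O |
              |∑ i, (k i : ℝ) * ω ξ i| ≥ γ * K ^ (-τ₁) ∧
              |(∑ i, (k i : ℝ) * ω ξ i) + Ω n ξ - Ω m ξ| ≤ γ * K ^ (-τ)}) ≤
          ENNReal.ofReal (C * γ ^ ((1 : ℝ) / 4) * K ^ (-τ₁)) := by
  classical
  set Vd : ℝ := (volume (Metric.ball (0 : EuclideanSpace ℝ (Fin d)) 1)).toReal with hVd_def
  have hVd0 : 0 ≤ Vd := ENNReal.toReal_nonneg
  refine ⟨49 * 3^d * ((ρ+4)/4)^(d-1) * (32*M)^d * (Vd + 1), by positivity, ?_⟩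
  intro β ς τ lam γ ε K hβ hαβ hς_def hτ_def hγ hγ1 hε hK hεγ hεM hγK
  intro O hO ω hω1 hω2 Ω hΩ1 hΩ2
  have hK0 : (0:ℝ) < K := by linarith
  have hK1 : (1:ℝ) ≤ K := by linarith
  have hτ₁0 : (0:ℝ) < τ₁ := by
    have : (0:ℝ) ≤ (d:ℝ) := Nat.cast_nonneg d
    linarith
  have hς0 : (0:ℝ) < ς := by
    rw [hς_def]
    apply div_pos (by linarith) (by linarith)
  have hτ0 : (0:ℝ) < τ := by rw [hτ_def]; linarith
  set δ : ℝ := γ * K ^ (-τ) with hδ_def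
  have hδ : 0 < δ := by
    apply mul_pos hγ (Real.rpow_pos_of_pos hK0 _)
  have hδ1 : δ ≤ 1 := by
    rw [hδ_def]
    calc γ * K ^ (-τ) ≤ 1 * 1 := by
          apply mul_le_mul hγ1 (Real.rpow_le_one_of_one_le_of_nonpos hK1 (by linarith))
            (Real.rpow_nonneg hK0.le _) one_pos.le
      _ = 1 := by norm_num
  set N : ℝ := K ^ (τ₁ + 2*ς) with hN_def
  have hN1 : (1:ℝ) ≤ N := Real.one_le_rpow hK1 (by linarith)
  have hNK : K ≤ N := by
    rw [hN_def]
    calc K = K ^ (1:ℝ) := (Real.rpow_one K).symm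
      _ ≤ K ^ (τ₁ + 2*ς) := Real.rpow_le_rpow_of_exponent_le hK1 (by linarith)
  have hN3 : (3:ℝ) ≤ N := by
    rw [hN_def]
    calc (3:ℝ) ≤ K ^ (2:ℕ) := by nlinarith
      _ = K ^ ((2:ℕ):ℝ) := (Real.rpow_natCast K 2).symm
      _ ≤ K ^ (τ₁ + 2*ς) := Real.rpow_le_rpow_of_exponent_le hK1 (by push_cast; linarith)
  have hKτ₁ : K ^ (-τ₁) ≤ γ/8 := by
    rw [Real.rpow_neg hK0.le]
    rw [inv_le_iff_one_le_mul₀ (Real.rpow_pos_of_pos hK0 _)]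
    calc (1:ℝ) = (8/γ) * (γ/8) := by field_simp
      _ ≤ (K ^ τ₁) * (γ/8) := by
          apply mul_le_mul_of_nonneg_right _ (by positivity)
          rw [div_le_iff₀ hγ]
          linarith
      _ = γ/8 * K ^ τ₁ := by ring
  set K₀ : ℤ := ⌊K⌋ with hK₀_def
  set N₀ : ℤ := ⌈N + K⌉ with hN₀_def
  set R : ((Fin d → ℤ) × ℤ × ℤ) → Set (EuclideanSpace ℝ (Fin d)) := fun t =>
    {ξ ∈ O | |∑ i, (t.1 i : ℝ) * ω ξ i| ≥ γ * K ^ (-τ₁) ∧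
      |(∑ i, (t.1 i : ℝ) * ω ξ i) + Ω t.2.1 ξ - Ω t.2.2 ξ| ≤ γ * K ^ (-τ)} with hR_def
  set T : Finset ((Fin d → ℤ) × ℤ × ℤ) :=
    ((Fintype.piFinset fun _ : Fin d => Finset.Icc (-K₀) K₀) ×ˢ
      (Finset.Icc (-N₀) N₀ ×ˢ Finset.Icc (-N₀) N₀)).filter
      (fun t => t.1 ≠ 0 ∧ t.2.1 ≠ 0 ∧ t.2.2 ≠ 0) with hT_def
  have cover : (⋃ k ∈ {k : Fin d → ℤ | k ≠ 0 ∧ ∀ i, (|k i| : ℝ) ≤ K},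
            ⋃ n ∈ {n : ℤ | n ≠ 0}, ⋃ m ∈ {m : ℤ | m ≠ 0 ∧ |n| ≠ |m| ∧ (|n - m| : ℝ) ≤ K},
            {ξ ∈ O |
              |∑ i, (k i : ℝ) * ω ξ i| ≥ γ * K ^ (-τ₁) ∧
              |(∑ i, (k i : ℝ) * ω ξ i) + Ω n ξ - Ω m ξ| ≤ γ * K ^ (-τ)})
      ⊆ ⋃ t ∈ T, R t := by
    intro ξ hξ
    simp only [Set.mem_iUnion, Set.mem_setOf_eq] at hξ
    obtain ⟨k, ⟨hk0, hkK⟩, n, hn0, m, ⟨hm0, hnmne, hnmK⟩, hξR⟩ := hξ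
    have hξO : ξ ∈ O := hξR.1
    have hcond1 := hξR.2.1
    have hcond2 := hξR.2.2
    have hγKτ : 0 < γ * K ^ (-τ₁) := mul_pos hγ (Real.rpow_pos_of_pos hK0 _)
    by_cases hcase : N ≤ |(n:ℝ)| ∧ N ≤ |(m:ℝ)|
    · -- resonance impossible when both |n|,|m| are large
      exfalso
      obtain ⟨hNn, hNm⟩ := hcase
      have hΩn := hΩ1 n hn0 ξ hξO
      have hΩm := hΩ1 m hm0 ξ hξO
      have habsab : |(|(n:ℝ)|) - (|(m:ℝ)|)| ≤ K :=
        le_trans (abs_abs_sub_abs_le_abs_sub _ _) hnmK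
      have hdiffα : |(|(n:ℝ)|) ^ α - (|(m:ℝ)|) ^ α| ≤ K * N ^ (α-1) :=
        rpow_diff_abs hα0 hα1.le hN1 hNn hNm habsab
      have h1α : (1:ℝ)-α ≠ 0 := ne_of_gt (by linarith)
      have hςeq : (1-α) * ς = τ₁ + 1 := by
        rw [hς_def, mul_comm, div_mul_cancel₀ _ h1α]
      have hKinv : K ^ (-1:ℝ) ≤ 1/2 := by
        rw [Real.rpow_neg_one]
        calc K⁻¹ ≤ (2:ℝ)⁻¹ := inv_anti₀ (by norm_num) hK
          _ = 1/2 := by norm_num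
      have hKN : K * N ^ (α-1) ≤ γ/16 * K ^ (-τ₁) := by
        have hNα : N ^ (α-1) = K ^ ((τ₁+2*ς)*(α-1)) := by
          rw [hN_def, ← Real.rpow_mul hK0.le]
        have hexp : 1 + (τ₁+2*ς)*(α-1) ≤ -(2*τ₁+1) := by
          nlinarith [hςeq, mul_nonneg (by linarith : (0:ℝ) ≤ 1-α) hτ₁0.le]
        calc K * N ^ (α-1) = K^(1:ℝ) * K^((τ₁+2*ς)*(α-1)) := by rw [Real.rpow_one, hNα]
          _ = K ^ (1 + (τ₁+2*ς)*(α-1)) := (Real.rpow_add hK0 _ _).symm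
          _ ≤ K ^ (-(2*τ₁+1)) := Real.rpow_le_rpow_of_exponent_le hK1 hexp
          _ = K ^ (-τ₁) * (K^(-τ₁) * K^(-1:ℝ)) := by
              rw [← Real.rpow_add hK0, ← Real.rpow_add hK0]
              ring_nf
          _ ≤ K ^ (-τ₁) * (γ/8 * (1/2)) := by
              apply mul_le_mul_of_nonneg_left _ (Real.rpow_nonneg hK0.le _)
              exact mul_le_mul hKτ₁ hKinv (Real.rpow_nonneg hK0.le _) (by linarith)
          _ = γ/16 * K ^ (-τ₁) := by ring
      have hdr : ε * |(n:ℝ)| ^ (-(2*β)) + ε * |(m:ℝ)| ^ (-(2*β)) ≤ γ/8 * K ^ (-τ₁) := by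
        have hN0 : (0:ℝ) < N := by linarith
        have ha : |(n:ℝ)| ^ (-(2*β)) ≤ N ^ (-(2*β)) :=
          rpow_anti_base hN0 hNn (by linarith)
        have hb : |(m:ℝ)| ^ (-(2*β)) ≤ N ^ (-(2*β)) :=
          rpow_anti_base hN0 hNm (by linarith)
        have hN2β : N ^ (-(2*β)) ≤ N ^ (-(2-2*α)) :=
          Real.rpow_le_rpow_of_exponent_le hN1 (by linarith)
        have hNk : N ^ (-(2-2*α)) = K ^ ((τ₁+2*ς)*(-(2-2*α))) := by
          rw [hN_def, ← Real.rpow_mul hK0.le]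
        have hexp2 : (τ₁+2*ς)*(-(2-2*α)) ≤ -(τ₁+1) := by
          nlinarith [hςeq, mul_nonneg (by linarith : (0:ℝ) ≤ 1-α) hτ₁0.le]
        have hNfin : N ^ (-(2-2*α)) ≤ K ^ (-τ₁) * (1/2) := by
          rw [hNk]
          calc K ^ ((τ₁+2*ς)*(-(2-2*α))) ≤ K ^ (-(τ₁+1)) :=
                Real.rpow_le_rpow_of_exponent_le hK1 hexp2
            _ = K ^ (-τ₁) * K ^ (-1:ℝ) := by
                rw [← Real.rpow_add hK0]; ring_nf
            _ ≤ K ^ (-τ₁) * (1/2) :=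
                mul_le_mul_of_nonneg_left hKinv (Real.rpow_nonneg hK0.le _)
        have hterm : ∀ c : ℝ, 0 ≤ c → c ^ (-(2*β)) ≤ N ^ (-(2*β)) →
            ε * c ^ (-(2*β)) ≤ γ/8 * (K ^ (-τ₁) * (1/2)) := by
          intro c hc0 hc
          exact mul_le_mul hεγ (le_trans hc (le_trans hN2β hNfin))
            (Real.rpow_nonneg hc0 _) (by linarith)
        have h₁ := hterm _ (abs_nonneg _) ha
        have h₂ := hterm _ (abs_nonneg _) hb
        linarith
      have hττ : γ * K ^ (-τ) ≤ γ/2 * K ^ (-τ₁) := by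
        have : K ^ (-τ) = K ^ (-τ₁) * K ^ (τ₁ - τ) := by
          rw [← Real.rpow_add hK0]; ring_nf
        rw [this]
        have h1 : K ^ (τ₁ - τ) ≤ K ^ (-1:ℝ) :=
          Real.rpow_le_rpow_of_exponent_le hK1 (by rw [hτ_def]; linarith)
        calc γ * (K ^ (-τ₁) * K ^ (τ₁ - τ)) ≤ γ * (K ^ (-τ₁) * (1/2)) := by
              apply mul_le_mul_of_nonneg_left _ hγ.le
              exact mul_le_mul_of_nonneg_left (le_trans h1 hKinv)
                (Real.rpow_nonneg hK0.le _)
          _ = γ/2 * K ^ (-τ₁) := by ring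
      have hX : |Ω n ξ - Ω m ξ| ≤ K * N ^ (α-1) + γ/8 * K ^ (-τ₁) := by
        have e1 := abs_le.1 hΩn
        have e2 := abs_le.1 hΩm
        have e3 := abs_le.1 hdiffα
        have e4 : ε * |(n:ℝ)| ^ (-(2*β)) + ε * |(m:ℝ)| ^ (-(2*β)) ≤ γ/8 * K ^ (-τ₁) := hdr
        have e5 : (0:ℝ) ≤ ε * |(n:ℝ)| ^ (-(2*β)) :=
          mul_nonneg hε (Real.rpow_nonneg (abs_nonneg _) _)
        have e6 : (0:ℝ) ≤ ε * |(m:ℝ)| ^ (-(2*β)) :=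
          mul_nonneg hε (Real.rpow_nonneg (abs_nonneg _) _)
        rw [abs_le]
        constructor <;> linarith
      have habs2 : |∑ i, (k i:ℝ) * ω ξ i| ≤
          |(∑ i, (k i:ℝ) * ω ξ i) + Ω n ξ - Ω m ξ| + |Ω n ξ - Ω m ξ| := by
        have hh : (∑ i, (k i:ℝ) * ω ξ i) =
            ((∑ i, (k i:ℝ) * ω ξ i) + Ω n ξ - Ω m ξ) + (Ω m ξ - Ω n ξ) := by ring
        calc |∑ i, (k i:ℝ) * ω ξ i|
            = |((∑ i, (k i:ℝ) * ω ξ i) + Ω n ξ - Ω m ξ) + (Ω m ξ - Ω n ξ)| := by rw [← hh]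
          _ ≤ |(∑ i, (k i:ℝ) * ω ξ i) + Ω n ξ - Ω m ξ| + |Ω m ξ - Ω n ξ| := abs_add_le _ _
          _ = |(∑ i, (k i:ℝ) * ω ξ i) + Ω n ξ - Ω m ξ| + |Ω n ξ - Ω m ξ| := by
              rw [abs_sub_comm (Ω m ξ) (Ω n ξ)]
      linarith
    · -- small case : the triple lies in T
      push_neg at hcase
      have habs : |(n:ℝ)| ≤ N + K ∧ |(m:ℝ)| ≤ N + K := by
        have htri1 : |(n:ℝ)| ≤ |(m:ℝ)| + K := by
          have := abs_sub_abs_le_abs_sub (n:ℝ) (m:ℝ)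
          linarith [hnmK]
        have htri2 : |(m:ℝ)| ≤ |(n:ℝ)| + K := by
          have := abs_sub_abs_le_abs_sub (m:ℝ) (n:ℝ)
          rw [abs_sub_comm] at this
          linarith [hnmK]
        rcases le_or_gt N |(n:ℝ)| with h1 | h1
        · have h2 := hcase h1
          constructor <;> linarith
        · constructor <;> linarith
      refine Set.mem_iUnion₂.2 ⟨(k, n, m), ?_, hξR⟩
      rw [hT_def, Finset.mem_filter]
      refine ⟨Finset.mem_product.2 ⟨?_, Finset.mem_product.2 ⟨?_, ?_⟩⟩, hk0, hn0, hm0⟩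
      · rw [Fintype.mem_piFinset]
        intro i
        rw [Finset.mem_Icc]
        have h1 : |k i| ≤ K₀ := by
          rw [hK₀_def, Int.le_floor]
          calc ((|k i| : ℤ) : ℝ) = |((k i : ℤ) : ℝ)| := by push_cast; ring
            _ ≤ K := hkK i
        exact abs_le.1 h1
      · rw [Finset.mem_Icc]
        have h1 : |n| ≤ N₀ := by
          have h2 : ((|n| : ℤ) : ℝ) ≤ (N₀ : ℝ) := by
            rw [hN₀_def]
            calc ((|n| : ℤ) : ℝ) = |(n:ℝ)| := by push_cast; ring
              _ ≤ N + K := habs.1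
              _ ≤ (⌈N + K⌉ : ℝ) := Int.le_ceil _
          exact_mod_cast h2
        exact abs_le.1 h1
      · rw [Finset.mem_Icc]
        have h1 : |m| ≤ N₀ := by
          have h2 : ((|m| : ℤ) : ℝ) ≤ (N₀ : ℝ) := by
            rw [hN₀_def]
            calc ((|m| : ℤ) : ℝ) = |(m:ℝ)| := by push_cast; ring
              _ ≤ N + K := habs.2
              _ ≤ (⌈N + K⌉ : ℝ) := Int.le_ceil _
          exact_mod_cast h2
        exact abs_le.1 h1
  have per : ∀ t ∈ T, volume (R t) ≤
      ENNReal.ofReal (((ρ + 4*δ)/(4*δ))^(d-1) * (32*M*δ)^d * Vd) := by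
    rintro ⟨k, n, m⟩ hT
    rw [hT_def, Finset.mem_filter] at hT
    obtain ⟨-, hk0, hn0, hm0⟩ := hT
    set kv : EuclideanSpace ℝ (Fin d) :=
      (WithLp.equiv 2 (Fin d → ℝ)).symm (fun i => (k i : ℝ)) with hkv_def
    have hkv_inner : ∀ x : EuclideanSpace ℝ (Fin d), ⟪kv, x⟫ = ∑ i, (k i : ℝ) * x i := by
      intro x
      rw [hkv_def, PiLp.inner_apply]
      simp [RCLike.inner_apply, conj_trivial, WithLp.equiv_symm_apply, PiLp.toLp_apply]
      exact Finset.sum_congr rfl (fun i _ => mul_comm _ _)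
    have hkv1 : 1 ≤ ‖kv‖ := by
      obtain ⟨i, hi⟩ := Function.ne_iff.1 hk0
      have h1 : (1:ℝ) ≤ |kv i| := by
        rw [hkv_def]
        simp only [WithLp.equiv_symm_apply, PiLp.toLp_apply]
        rw [← Int.cast_abs]
        exact_mod_cast Int.one_le_abs (by simpa using hi)
      exact h1.trans (coord_le_norm d kv i)
    have hkv0 : kv ≠ 0 := by
      intro h
      rw [h, norm_zero] at hkv1
      linarith
    set e : EuclideanSpace ℝ (Fin d) := ‖kv‖⁻¹ • kv with he_def
    have he : ‖e‖ = 1 := by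
      rw [he_def, norm_smul, norm_inv, norm_norm]
      field_simp
    have hsub : R (k, n, m) ⊆ O := fun ξ hξ => hξ.1
    have key := thinA d hd e he (R (k, n, m)) ω M ρ δ hM hρ hδ
      (fun ξ hξ η hη => hω2 ξ (hsub hξ) η (hsub hη))
      (fun ξ hξ => hω1 ξ (hsub hξ))
      ?_
    · calc volume (R (k, n, m)) ≤ _ := key
        _ = ENNReal.ofReal (((ρ + 4*δ)/(4*δ))^(d-1) * (32*M*δ)^d * Vd) := by
            have hball_ne : volume (ball (0 : EuclideanSpace ℝ (Fin d)) 1) ≠ ⊤ :=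
              measure_ball_lt_top.ne
            symm
            rw [hVd_def, ENNReal.ofReal_mul
              (by positivity : (0:ℝ) ≤ ((ρ + 4*δ)/(4*δ))^(d-1) * (32*M*δ)^d),
              ENNReal.ofReal_toReal hball_ne]
    · intro ξ hξ η hη
      obtain ⟨hξO, hξ1, hξ2⟩ := hξ
      obtain ⟨hηO, hη1, hη2⟩ := hη
      have hlip : ∀ j : ℤ, j ≠ 0 → |Ω j ξ - Ω j η| ≤ ε * ‖ξ - η‖ := by
        intro j hj
        have h1 := hΩ2 j hj ξ hξO η hηO
        have h2 : |(j:ℝ)| ^ (-(2*β)) ≤ 1 := by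
          apply Real.rpow_le_one_of_one_le_of_nonpos
          · exact_mod_cast Int.one_le_abs hj
          · linarith
        calc |Ω j ξ - Ω j η| ≤ ε * |(j:ℝ)| ^ (-(2*β)) * ‖ξ - η‖ := h1
          _ ≤ ε * 1 * ‖ξ - η‖ := by
              apply mul_le_mul_of_nonneg_right _ (norm_nonneg _)
              exact mul_le_mul_of_nonneg_left h2 hε
          _ = ε * ‖ξ - η‖ := by ring
      have hkvd : |⟪kv, ω ξ - ω η⟫| ≤ 2*δ + ‖ω ξ - ω η‖/2 := by
        have hdiff : ⟪kv, ω ξ - ω η⟫ =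
            ((∑ i, (k i : ℝ) * ω ξ i) + Ω n ξ - Ω m ξ)
            - ((∑ i, (k i : ℝ) * ω η i) + Ω n η - Ω m η)
            - (Ω n ξ - Ω n η) + (Ω m ξ - Ω m η) := by
          rw [inner_sub_right, hkv_inner, hkv_inner]
          ring
        have hd1 := abs_le.1 hξ2
        have hd2 := abs_le.1 hη2
        have hl1 := abs_le.1 (hlip n hn0)
        have hl2 := abs_le.1 (hlip m hm0)
        have hno : ε * ‖ξ - η‖ ≤ (1/4) * ‖ω ξ - ω η‖ := by
          have h1 : ‖ξ - η‖ ≤ M * ‖ω ξ - ω η‖ := hω2 ξ hξO η hηO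
          have h2 : ε * ‖ξ - η‖ ≤ ε * (M * ‖ω ξ - ω η‖) :=
            mul_le_mul_of_nonneg_left h1 hε
          have h3 : ε * M * ‖ω ξ - ω η‖ ≤ (1/4) * ‖ω ξ - ω η‖ :=
            mul_le_mul_of_nonneg_right hεM (norm_nonneg _)
          nlinarith
        rw [hdiff, abs_le]
        constructor <;> nlinarith [abs_nonneg (Ω n ξ - Ω n η)]
      have hee : ⟪e, ω ξ - ω η⟫ = ‖kv‖⁻¹ * ⟪kv, ω ξ - ω η⟫ := by
        rw [he_def, real_inner_smul_left]
      rw [hee, abs_mul, abs_inv, abs_norm]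
      calc ‖kv‖⁻¹ * |⟪kv, ω ξ - ω η⟫| ≤ 1 * |⟪kv, ω ξ - ω η⟫| := by
            apply mul_le_mul_of_nonneg_right _ (abs_nonneg _)
            rw [inv_le_one_iff₀]
            right; exact hkv1
        _ ≤ 2*δ + ‖ω ξ - ω η‖/2 := by rw [one_mul]; exact hkvd
  have cardT : (T.card : ℝ) ≤ (3*K)^d * (7*N)^2 := by
    have hK₀0 : 0 ≤ K₀ := by rw [hK₀_def]; exact Int.floor_nonneg.2 (by linarith)
    have hN₀0 : 0 ≤ N₀ := by rw [hN₀_def]; exact Int.ceil_nonneg (by linarith)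
    have hcK : ((Finset.Icc (-K₀) K₀).card : ℝ) = 2*(K₀:ℝ) + 1 := by
      rw [Int.card_Icc, show K₀ + 1 - -K₀ = 2*K₀ + 1 by ring]
      have h := Int.toNat_of_nonneg (by omega : (0:ℤ) ≤ 2*K₀ + 1)
      exact_mod_cast congrArg (Int.cast : ℤ → ℝ) h
    have hcN : ((Finset.Icc (-N₀) N₀).card : ℝ) = 2*(N₀:ℝ) + 1 := by
      rw [Int.card_Icc, show N₀ + 1 - -N₀ = 2*N₀ + 1 by ring]
      have h := Int.toNat_of_nonneg (by omega : (0:ℤ) ≤ 2*N₀ + 1)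
      exact_mod_cast congrArg (Int.cast : ℤ → ℝ) h
    have hKb : 2*(K₀:ℝ) + 1 ≤ 3*K := by
      have := Int.floor_le K
      rw [← hK₀_def] at this
      linarith
    have hNb : 2*(N₀:ℝ) + 1 ≤ 7*N := by
      have h1 : (N₀:ℝ) < N + K + 1 := by
        rw [hN₀_def]
        exact Int.ceil_lt_add_one _
      linarith
    have hcard : T.card ≤ ((Finset.Icc (-K₀) K₀).card)^d * ((Finset.Icc (-N₀) N₀).card *
        (Finset.Icc (-N₀) N₀).card) := by
      rw [hT_def]
      calc _ ≤ ((Fintype.piFinset fun _ : Fin d => Finset.Icc (-K₀) K₀) ×ˢ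
        (Finset.Icc (-N₀) N₀ ×ˢ Finset.Icc (-N₀) N₀)).card := Finset.card_filter_le _ _
        _ = _ := by
          rw [Finset.card_product, Finset.card_product, Fintype.card_piFinset]
          simp
    calc (T.card : ℝ) ≤ (((Finset.Icc (-K₀) K₀).card : ℝ))^d * (((Finset.Icc (-N₀) N₀).card : ℝ) *
        ((Finset.Icc (-N₀) N₀).card : ℝ)) := by exact_mod_cast hcard
      _ ≤ (3*K)^d * ((7*N) * (7*N)) := by
          apply mul_le_mul
          · apply pow_le_pow_left₀ (by positivity) (by rw [hcK]; exact hKb)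
          · apply mul_le_mul <;> first
              | (rw [hcN]; exact hNb)
              | positivity
          · positivity
          · positivity
      _ = (3*K)^d * (7*N)^2 := by ring
  have final : ((3*K)^d * (7*N)^2) * (((ρ + 4*δ)/(4*δ))^(d-1) * (32*M*δ)^d * Vd) ≤
      (49 * 3^d * ((ρ+4)/4)^(d-1) * (32*M)^d * (Vd + 1)) * γ ^ ((1:ℝ)/4) * K ^ (-τ₁) := by
    have hτ₁0f : (0:ℝ) < τ₁ := by
      have : (0:ℝ) ≤ (d:ℝ) := Nat.cast_nonneg d
      linarith
    have hdd : d = (d-1)+1 := (Nat.succ_pred_eq_of_pos hd).symm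
    have e1 : ((ρ + 4*δ)/(4*δ))^(d-1) * (32*M*δ)^d = ((ρ+4*δ)/4)^(d-1) * ((32*M)^d * δ) := by
      have h1 : ((ρ+4*δ)/(4*δ))^(d-1) * δ^(d-1) = ((ρ+4*δ)/4)^(d-1) := by
        rw [← mul_pow]
        congr 1
        field_simp
      calc ((ρ + 4*δ)/(4*δ))^(d-1) * (32*M*δ)^d
          = ((ρ + 4*δ)/(4*δ))^(d-1) * ((32*M)^d * δ^d) := by rw [mul_pow]
        _ = ((ρ + 4*δ)/(4*δ))^(d-1) * ((32*M)^d * (δ^(d-1) * δ)) := by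
            rw [show δ^d = δ^(d-1) * δ by rw [hdd]; rw [pow_succ]; rw [← hdd]]
        _ = (((ρ + 4*δ)/(4*δ))^(d-1) * δ^(d-1)) * ((32*M)^d * δ) := by ring
        _ = _ := by rw [h1]
    have e2 : ((ρ+4*δ)/4)^(d-1) ≤ ((ρ+4)/4)^(d-1) := by
      apply pow_le_pow_left₀ (by positivity)
      apply div_le_div_of_nonneg_right ?_ (by norm_num)
      linarith
    have e3 : K^d * N^2 * δ ≤ γ * K ^ (-τ₁) := by
      have hKd : K ^ ((d:ℕ):ℝ) = K ^ d := Real.rpow_natCast K d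
      have hN2 : N^2 = K ^ ((τ₁+2*ς)*2) := by
        rw [hN_def, ← Real.rpow_natCast (K ^ (τ₁+2*ς)) 2, ← Real.rpow_mul hK0.le]
        norm_num
      have h1 : K^d * N^2 * δ = γ * K ^ ((d:ℝ) + (τ₁ + 2*ς)*2 + (-τ)) := by
        rw [Real.rpow_add hK0, Real.rpow_add hK0, hKd, ← hN2, hδ_def]
        ring
      rw [h1]
      apply mul_le_mul_of_nonneg_left _ hγ.le
      apply Real.rpow_le_rpow_of_exponent_le hK1
      rw [hτ_def]
      linarith
    have e4 : γ ≤ γ ^ ((1:ℝ)/4) := by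
      calc γ = γ ^ (1:ℝ) := (Real.rpow_one γ).symm
        _ ≤ γ ^ ((1:ℝ)/4) := Real.rpow_le_rpow_of_exponent_ge hγ hγ1 (by norm_num)
    have hKτ : 0 < K ^ (-τ₁) := Real.rpow_pos_of_pos hK0 _
    have hγ4 : 0 < γ ^ ((1:ℝ)/4) := Real.rpow_pos_of_pos hγ _
    calc ((3*K)^d * (7*N)^2) * (((ρ + 4*δ)/(4*δ))^(d-1) * (32*M*δ)^d * Vd)
        = (49 * 3^d * ((ρ+4*δ)/4)^(d-1) * (32*M)^d * Vd) * (K^d * N^2 * δ) := by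
          rw [e1, mul_pow 3 K, mul_pow 7 N]
          ring
      _ ≤ (49 * 3^d * ((ρ+4)/4)^(d-1) * (32*M)^d * (Vd+1)) * (γ * K ^ (-τ₁)) := by
          apply mul_le_mul _ e3 (by positivity) (by positivity)
          have h5 : (0:ℝ) ≤ 49 * 3^d * (32*M)^d := by positivity
          have h6 : ((ρ+4*δ)/4)^(d-1) * Vd ≤ ((ρ+4)/4)^(d-1) * (Vd+1) := by
            apply mul_le_mul e2 (by linarith) hVd0 (by positivity)
          calc 49 * 3^d * ((ρ+4*δ)/4)^(d-1) * (32*M)^d * Vd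
              = (49 * 3^d * (32*M)^d) * (((ρ+4*δ)/4)^(d-1) * Vd) := by ring
            _ ≤ (49 * 3^d * (32*M)^d) * (((ρ+4)/4)^(d-1) * (Vd+1)) :=
                mul_le_mul_of_nonneg_left h6 h5
            _ = _ := by ring
      _ ≤ (49 * 3^d * ((ρ+4)/4)^(d-1) * (32*M)^d * (Vd+1)) * (γ ^ ((1:ℝ)/4) * K ^ (-τ₁)) := by
          apply mul_le_mul_of_nonneg_left _ (by positivity)
          exact mul_le_mul_of_nonneg_right e4 hKτ.le
      _ = _ := by ring
  calc volume (⋃ k ∈ {k : Fin d → ℤ | k ≠ 0 ∧ ∀ i, (|k i| : ℝ) ≤ K},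
            ⋃ n ∈ {n : ℤ | n ≠ 0}, ⋃ m ∈ {m : ℤ | m ≠ 0 ∧ |n| ≠ |m| ∧ (|n - m| : ℝ) ≤ K},
            {ξ ∈ O |
              |∑ i, (k i : ℝ) * ω ξ i| ≥ γ * K ^ (-τ₁) ∧
              |(∑ i, (k i : ℝ) * ω ξ i) + Ω n ξ - Ω m ξ| ≤ γ * K ^ (-τ)})
      ≤ volume (⋃ t ∈ T, R t) := measure_mono cover
    _ ≤ ∑ t ∈ T, volume (R t) := measure_biUnion_finset_le _ _
    _ ≤ T.card • ENNReal.ofReal (((ρ + 4*δ)/(4*δ))^(d-1) * (32*M*δ)^d * Vd) :=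
        Finset.sum_le_card_nsmul _ _ _ per
    _ = (T.card : ENNReal) * ENNReal.ofReal (((ρ + 4*δ)/(4*δ))^(d-1) * (32*M*δ)^d * Vd) :=
        nsmul_eq_mul _ _
    _ ≤ ENNReal.ofReal ((3*K)^d * (7*N)^2) *
        ENNReal.ofReal (((ρ + 4*δ)/(4*δ))^(d-1) * (32*M*δ)^d * Vd) := by
        apply mul_le_mul_left
        rw [← ENNReal.ofReal_natCast]
        exact ENNReal.ofReal_le_ofReal cardT
    _ = ENNReal.ofReal (((3*K)^d * (7*N)^2) *
        (((ρ + 4*δ)/(4*δ))^(d-1) * (32*M*δ)^d * Vd)) := by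
        rw [← ENNReal.ofReal_mul (by positivity)]
    _ ≤ ENNReal.ofReal ((49 * 3^d * ((ρ+4)/4)^(d-1) * (32*M)^d * (Vd + 1)) *
        γ ^ ((1:ℝ)/4) * K ^ (-τ₁)) := ENNReal.ofReal_le_ofReal final
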